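/- arXiv:2203.16211 — 5 statements merged into one kernel-verified Lean document; each statement's English description precedes it below -/
import Mathlib

section
/- Let G = (N, Σ, P, S) be an LS2NF, let A ∈ N and let w be a sentence. The signature (A, w) is locally ambiguous if and only if the derivation A ⇒ w is ambiguous. -/
/-- A positioned token: a terminal together with a line and column number. -/
structure Token (T : Type) where
  tm : T
  line : ℕ
  col : ℕ

/-- A sentence is a finite sequence of positioned tokens. -/
abbrev Sentence (T : Type) := List (Token T)

/-- The right-hand side (clause) of an LS2NF production rule. -/
inductive Clause (T N : Type) where
  | eps : Clause T N
  | atom : T → Clause T N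
  | unary : N → (Sentence T → Prop) → Clause T N
  | binary : N → N → (Sentence T → Sentence T → Prop) → Clause T N

/-- A layout-sensitive grammar in binary normal form (LS2NF).
Layout constraints hold on empty sentences by convention. -/
structure LS2NF (T N : Type) where
  P : Set (N × Clause T N)
  S : N
  finite : P.Finite
  unary_eps : ∀ A B φ, (A, Clause.unary B φ) ∈ P → φ []
  binary_eps_left : ∀ A B₁ B₂ φ, (A, Clause.binary B₁ B₂ φ) ∈ P → ∀ w, φ [] w
  binary_eps_right : ∀ A B₁ B₂ φ, (A, Clause.binary B₁ B₂ φ) ∈ P → ∀ w, φ w []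

/-- Parse trees. -/
inductive ParseTree (T N : Type) where
  | eps : N → ParseTree T N
  | leaf : N → Token T → ParseTree T N
  | unary : N → ParseTree T N → ParseTree T N
  | binary : N → ParseTree T N → ParseTree T N → ParseTree T N

namespace ParseTree

variable {T N : Type}

/-- Root nonterminal of a parse tree. -/
def root : ParseTree T N → N
  | .eps A => A
  | .leaf A _ => A
  | .unary A _ => A
  | .binary A _ _ => A

/-- The sentence at the token leaves of a parse tree, left to right. -/
def word : ParseTree T N → Sentence T
  | .eps _ => []
  | .leaf _ tok => [tok]
  | .unary _ t => t.word
  | .binary _ t₁ t₂ => t₁.word ++ t₂.word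

/-- Validity of a parse tree w.r.t. a grammar. -/
inductive Valid (G : LS2NF T N) : ParseTree T N → Prop
  | eps {A} : (A, Clause.eps) ∈ G.P → Valid G (.eps A)
  | leaf {A} {tok : Token T} : (A, Clause.atom tok.tm) ∈ G.P → Valid G (.leaf A tok)
  | unary {A t φ} : (A, Clause.unary (root t) φ) ∈ G.P → φ (word t) → Valid G t →
      Valid G (.unary A t)
  | binary {A t₁ t₂ φ} : (A, Clause.binary (root t₁) (root t₂) φ) ∈ G.P →
      φ (word t₁) (word t₂) → Valid G t₁ → Valid G t₂ → Valid G (.binary A t₁ t₂)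

end ParseTree

variable {T N : Type}

/-- `t` witnesses the derivation `A ⇒ w`. -/
def Witness (G : LS2NF T N) (t : ParseTree T N) (A : N) (w : Sentence T) : Prop :=
  t.Valid G ∧ t.root = A ∧ t.word = w

/-- `A ⇒ w`: some parse tree witnesses it. -/
def Derives (G : LS2NF T N) (A : N) (w : Sentence T) : Prop :=
  ∃ t, Witness G t A w

/-- `A` is nullable: `A ⇒ ε`. -/
def Nullable (G : LS2NF T N) (A : N) : Prop := Derives G A []

/-- The derivation `A ⇒ w` is ambiguous: two distinct witnessing parse trees exist. -/
def Ambiguous (G : LS2NF T N) (A : N) (w : Sentence T) : Prop :=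
  ∃ t₁ t₂, t₁ ≠ t₂ ∧ Witness G t₁ A w ∧ Witness G t₂ A w

/-- Subtree relation on parse trees. -/
inductive IsSubtree : ParseTree T N → ParseTree T N → Prop
  | refl (t) : IsSubtree t t
  | unary {s t} (A) : IsSubtree s t → IsSubtree s (.unary A t)
  | left {s t₁} (A) (t₂) : IsSubtree s t₁ → IsSubtree s (.binary A t₁ t₂)
  | right {s t₂} (A) (t₁) : IsSubtree s t₂ → IsSubtree s (.binary A t₁ t₂)

/-- One-step reachability `↪` on signatures. -/
inductive StepReach (G : LS2NF T N) : N × Sentence T → N × Sentence T → Prop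
  | unary {A B φ w} : (A, Clause.unary B φ) ∈ G.P → φ w → StepReach G (A, w) (B, w)
  | left {A B B' φ w₁ w₂} : (A, Clause.binary B B' φ) ∈ G.P → φ w₁ w₂ → Derives G B' w₂ →
      StepReach G (A, w₁ ++ w₂) (B, w₁)
  | right {A B B' φ w₁ w₂} : (A, Clause.binary B' B φ) ∈ G.P → φ w₁ w₂ → Derives G B' w₁ →
      StepReach G (A, w₁ ++ w₂) (B, w₂)

/-- Reachability `⇝`: reflexive transitive closure of `↪`. -/
def Reach (G : LS2NF T N) : N × Sentence T → N × Sentence T → Prop :=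
  Relation.ReflTransGen (StepReach G)

/-- `(B, v)` is a sub-derivation of `(A, w)`. -/
def SubDerivation (G : LS2NF T N) (B : N) (v : Sentence T) (A : N) (w : Sentence T) : Prop :=
  ∀ t, Witness G t B v → ∃ T', Witness G T' A w ∧ IsSubtree t T'

/-- Similarity relation `∼` on parse trees. -/
inductive ParseSimilar : ParseTree T N → ParseTree T N → Prop
  | eps (A : N) : ParseSimilar (.eps A) (.eps A)
  | leaf (A : N) (tok : Token T) : ParseSimilar (.leaf A tok) (.leaf A tok)
  | unary {t₁ t₂ : ParseTree T N} (A : N) : t₁.root = t₂.root → t₁.word = t₂.word →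
      ParseSimilar (.unary A t₁) (.unary A t₂)
  | binary {t₁₁ t₁₂ t₂₁ t₂₂ : ParseTree T N} (A : N) :
      t₁₁.root = t₂₁.root → t₁₁.word = t₂₁.word →
      t₁₂.root = t₂₂.root → t₁₂.word = t₂₂.word →
      ParseSimilar (.binary A t₁₁ t₁₂) (.binary A t₂₁ t₂₂)

/-- A signature `(A, w)` is locally ambiguous. -/
def LocalAmb (G : LS2NF T N) (A : N) (w : Sentence T) : Prop :=
  ∃ H h t₁ t₂, Reach G (A, w) (H, h) ∧ ¬ ParseSimilar t₁ t₂ ∧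
    Witness G t₁ H h ∧ Witness G t₂ H h

/-- Edge of the graph representation of an LS2NF. -/
def Edge (G : LS2NF T N) (A B : N) : Prop :=
  (∃ φ, (A, Clause.unary B φ) ∈ G.P) ∨
  (∃ B' φ, (A, Clause.binary B B' φ) ∈ G.P ∧ Nullable G B') ∨
  (∃ B' φ, (A, Clause.binary B' B φ) ∈ G.P ∧ Nullable G B')

/-- An LS2NF is acyclic if its graph representation has no directed cycle. -/
def Acyclic (G : LS2NF T N) : Prop := ∀ A, ¬ Relation.TransGen (Edge G) A A

/-- A model for the SMT encoding with bound `k`: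
a sentence of length `k` plus Boolean values for the variables `D`, `Rε` and `R`. -/
structure Model (T N : Type) (k : ℕ) where
  word : Sentence T
  len_eq : word.length = k
  D : N → ℕ → ℕ → Bool
  Re : N → Bool
  R : N → ℕ → ℕ → Bool

namespace Model

variable {k : ℕ}

/-- `w^m_{x,δ}`: the length-`δ` contiguous subword of `w^m` starting at index `x`. -/
def sub (m : Model T N k) (x δ : ℕ) : Sentence T := (m.word.drop x).take δ

/-- `tm_x`: the terminal of the `x`-th token of `w^m` (if any). -/
def tmAt (m : Model T N k) (x : ℕ) : Option T := (m.word[x]?).map Token.tm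

end Model

/-- `m ⊨ Φ_D^k`. -/
def SatPhiD (G : LS2NF T N) {k : ℕ} (m : Model T N k) : Prop :=
  ∀ A x δ, 0 < δ → x + δ ≤ k →
    (m.D A x δ = true ↔
      (∃ a, (A, Clause.atom a) ∈ G.P ∧ δ = 1 ∧ m.tmAt x = some a) ∨
      (∃ B φ, (A, Clause.unary B φ) ∈ G.P ∧ m.D B x δ = true ∧ φ (m.sub x δ)) ∨
      (∃ B₁ B₂ φ, (A, Clause.binary B₁ B₂ φ) ∈ G.P ∧
        ((Nullable G B₁ ∧ m.D B₂ x δ = true) ∨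
         (Nullable G B₂ ∧ m.D B₁ x δ = true) ∨
         (∃ δ', 0 < δ' ∧ δ' < δ ∧ m.D B₁ x δ' = true ∧
            m.D B₂ (x + δ') (δ - δ') = true ∧
            φ (m.sub x δ') (m.sub (x + δ') (δ - δ'))))))

/-- `m ⊨ Φ_Rε^k`. -/
def SatPhiRe (G : LS2NF T N) {k : ℕ} (m : Model T N k) : Prop :=
  ∀ B, (m.Re B = true ↔
    (B = G.S ∧ k = 0) ∨
    (∃ A φ, (A, Clause.unary B φ) ∈ G.P ∧ m.Re A = true) ∨
    (∃ A B' φ, ((A, Clause.binary B B' φ) ∈ G.P ∨ (A, Clause.binary B' B φ) ∈ G.P) ∧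
      ((m.Re A = true ∧ Nullable G B') ∨
       (∃ x δ, 0 < δ ∧ x + δ ≤ k ∧ m.R A x δ = true ∧ m.D B' x δ = true))))

/-- `m ⊨ Φ_R^k`. -/
def SatPhiR (G : LS2NF T N) {k : ℕ} (m : Model T N k) : Prop :=
  ∀ B x δ, 0 < δ → x + δ ≤ k →
    (m.R B x δ = true ↔
      (B = G.S ∧ x = 0 ∧ δ = k) ∨
      (∃ A φ, (A, Clause.unary B φ) ∈ G.P ∧ m.R A x δ = true ∧ φ (m.sub x δ)) ∨
      (∃ A B' φ δ', (A, Clause.binary B B' φ) ∈ G.P ∧ x + δ + δ' ≤ k ∧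
        m.R A x (δ + δ') = true ∧
        (if δ' = 0 then Nullable G B' else m.D B' (x + δ) δ' = true) ∧
        φ (m.sub x δ) (m.sub (x + δ) δ')) ∨
      (∃ A B' φ δ', (A, Clause.binary B' B φ) ∈ G.P ∧ δ' ≤ x ∧
        m.R A (x - δ') (δ' + δ) = true ∧
        (if δ' = 0 then Nullable G B' else m.D B' (x - δ') δ' = true) ∧
        φ (m.sub (x - δ') δ') (m.sub x δ)))

/-- Using clauses `γ`. -/
inductive UClause (T N : Type) where
  | eps : UClause T N
  | atom : T → UClause T N
  | unary : N → (Sentence T → Prop) → UClause T N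
  | binary : N → ℕ → (Sentence T → Sentence T → Prop) → N → UClause T N

/-- Membership in the using-clause set `Γ(A, δ)`. -/
def InGamma (G : LS2NF T N) (A : N) (δ : ℕ) : UClause T N → Prop
  | .eps => (A, Clause.eps) ∈ G.P
  | .atom a => (A, Clause.atom a) ∈ G.P
  | .unary B φ => (A, Clause.unary B φ) ∈ G.P
  | .binary B₁ δ' φ B₂ => (A, Clause.binary B₁ B₂ φ) ∈ G.P ∧ δ' ≤ δ

/-- Semantics `⟦γ⟧_{x,δ}` of a using clause under a model. -/
def USem (G : LS2NF T N) {k : ℕ} (m : Model T N k) (x δ : ℕ) : UClause T N → Prop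
  | .eps => δ = 0
  | .atom a => δ = 1 ∧ m.tmAt x = some a
  | .unary B φ => if δ = 0 then Nullable G B else (m.D B x δ = true ∧ φ (m.sub x δ))
  | .binary B₁ δ' φ B₂ =>
      φ (m.sub x δ') (m.sub (x + δ') (δ - δ')) ∧
      (if δ' = 0 then Nullable G B₁ else m.D B₁ x δ' = true) ∧
      (if δ' = δ then Nullable G B₂ else m.D B₂ (x + δ') (δ - δ') = true)

/-- `Φ_multi(A, x, δ)` holds under `m`. -/
def PhiMulti (G : LS2NF T N) {k : ℕ} (m : Model T N k) (A : N) (x δ : ℕ) : Prop :=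
  ∃ γ₁ γ₂ : UClause T N, γ₁ ≠ γ₂ ∧ InGamma G A δ γ₁ ∧ InGamma G A δ γ₂ ∧
    USem G m x δ γ₁ ∧ USem G m x δ γ₂

/-- `m ⊨ Φ_amb^k`. -/
def SatPhiAmb (G : LS2NF T N) {k : ℕ} (m : Model T N k) : Prop :=
  SatPhiD G m ∧ SatPhiRe G m ∧ SatPhiR G m ∧
  ∃ H : N, (m.Re H = true ∧ PhiMulti G m H 0 0) ∨
    (∃ x δ, 0 < δ ∧ x + δ ≤ k ∧ m.R H x δ = true ∧ PhiMulti G m H x δ)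

/-- `G'` is a refinement of `G` (same nonterminals, terminals and start symbol). -/
def Refinement (G G' : LS2NF T N) : Prop :=
  G'.S = G.S ∧
  ∀ r ∈ G'.P, r ∈ G.P ∨
    (∃ A B φ, r = (A, Clause.unary B φ) ∧
      (A, Clause.unary B (fun _ => True)) ∈ G.P) ∨
    (∃ A B C φ, r = (A, Clause.binary B C φ) ∧
      (A, Clause.binary B C (fun _ _ => True)) ∈ G.P)

lemma similar_refl (t : ParseTree T N) : ParseSimilar t t := by
  cases t <;> constructor <;> rfl

lemma amb_of_step {G : LS2NF T N} {p q : N × Sentence T} (h : StepReach G p q)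
    (ha : Ambiguous G q.1 q.2) : Ambiguous G p.1 p.2 := by
  obtain ⟨t₁, t₂, hne, ⟨hv₁, hr₁, hw₁⟩, ⟨hv₂, hr₂, hw₂⟩⟩ := ha
  cases h with
  | @unary A B φ w hP hφ =>
    refine ⟨.unary A t₁, .unary A t₂, by simpa using hne, ?_, ?_⟩ <;>
      exact ⟨ParseTree.Valid.unary (by rw [hr₁] at *; rw [hr₂] at *; exact hP)
        (by simp only [hw₁, hw₂] at *; exact hφ) (by assumption), rfl,
        by simp [ParseTree.word, hw₁, hw₂]⟩
  | @left A B B' φ w₁ w₂ hP hφ hd =>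
    obtain ⟨t', hv', hr', hw'⟩ := hd
    refine ⟨.binary A t₁ t', .binary A t₂ t', by simpa using hne, ?_, ?_⟩ <;>
      exact ⟨ParseTree.Valid.binary
        (by rw [hr₁] at *; rw [hr₂] at *; rw [hr']; exact hP)
        (by simp only [hw₁, hw₂, hw'] at *; exact hφ) (by assumption) hv', rfl,
        by simp [ParseTree.word, hw₁, hw₂, hw']⟩
  | @right A B B' φ w₁ w₂ hP hφ hd =>
    obtain ⟨t', hv', hr', hw'⟩ := hd
    refine ⟨.binary A t' t₁, .binary A t' t₂, by simpa using hne, ?_, ?_⟩ <;>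
      exact ⟨ParseTree.Valid.binary
        (by rw [hr₁] at *; rw [hr₂] at *; rw [hr']; exact hP)
        (by simp only [hw₁, hw₂, hw'] at *; exact hφ) hv' (by assumption), rfl,
        by simp [ParseTree.word, hw₁, hw₂, hw']⟩

lemma amb_of_reach {G : LS2NF T N} {p q : N × Sentence T} (h : Reach G p q)
    (ha : Ambiguous G q.1 q.2) : Ambiguous G p.1 p.2 := by
  induction h using Relation.ReflTransGen.head_induction_on with
  | refl => exact ha
  | head hstep _ ih => exact amb_of_step hstep ih

lemma localAmb_of_step {G : LS2NF T N} {A : N} {w : Sentence T} {B : N} {v : Sentence T}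
    (h : StepReach G (A, w) (B, v)) (hl : LocalAmb G B v) : LocalAmb G A w := by
  obtain ⟨H, hh, t₁, t₂, hr, rest⟩ := hl
  exact ⟨H, hh, t₁, t₂, Relation.ReflTransGen.head h hr, rest⟩

lemma distinct_localAmb {G : LS2NF T N} (t₁ : ParseTree T N) :
    ∀ t₂ : ParseTree T N, t₁ ≠ t₂ → t₁.Valid G → t₂.Valid G →
      t₂.root = t₁.root → t₂.word = t₁.word → LocalAmb G t₁.root t₁.word := by
  induction t₁ with
  | eps A =>
    intro t₂ hne hv₁ hv₂ hr hw
    by_cases hs : ParseSimilar (ParseTree.eps A) t₂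
    · cases hs; exact absurd rfl hne
    · exact ⟨_, _, _, t₂, Relation.ReflTransGen.refl, hs, ⟨hv₁, rfl, rfl⟩, ⟨hv₂, hr, hw⟩⟩
  | leaf A tok =>
    intro t₂ hne hv₁ hv₂ hr hw
    by_cases hs : ParseSimilar (ParseTree.leaf A tok) t₂
    · cases hs; exact absurd rfl hne
    · exact ⟨_, _, _, t₂, Relation.ReflTransGen.refl, hs, ⟨hv₁, rfl, rfl⟩, ⟨hv₂, hr, hw⟩⟩
  | unary A s₁ ih =>
    intro t₂ hne hv₁ hv₂ hr hw
    by_cases hs : ParseSimilar (ParseTree.unary A s₁) t₂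
    · cases hs with
      | @unary _ s₂ _ hrs hws =>
        cases hv₁ with
        | @unary _ _ φ hP hφ hvs₁ =>
          cases hv₂ with
          | unary _ _ hvs₂ =>
            have hne' : s₁ ≠ s₂ := fun e => hne (by rw [e])
            exact localAmb_of_step (StepReach.unary hP hφ)
              (ih s₂ hne' hvs₁ hvs₂ hrs.symm hws.symm)
    · exact ⟨_, _, _, t₂, Relation.ReflTransGen.refl, hs, ⟨hv₁, rfl, rfl⟩, ⟨hv₂, hr, hw⟩⟩
  | binary A s₁ u₁ ihs ihu =>
    intro t₂ hne hv₁ hv₂ hr hw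
    by_cases hs : ParseSimilar (ParseTree.binary A s₁ u₁) t₂
    · cases hs with
      | @binary _ _ s₂ u₂ _ hrs hws hru hwu =>
        cases hv₁ with
        | @binary _ _ _ φ hP hφ hvs₁ hvu₁ =>
          cases hv₂ with
          | binary _ _ hvs₂ hvu₂ =>
            rcases ne_or_eq s₁ s₂ with hne' | heq
            · exact localAmb_of_step (StepReach.left hP hφ ⟨u₁, hvu₁, rfl, rfl⟩)
                (ihs s₂ hne' hvs₁ hvs₂ hrs.symm hws.symm)
            · have hne'' : u₁ ≠ u₂ := fun e => hne (by rw [heq, e])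
              exact localAmb_of_step (StepReach.right hP hφ ⟨s₁, hvs₁, rfl, rfl⟩)
                (ihu u₂ hne'' hvu₁ hvu₂ hru.symm hwu.symm)
    · exact ⟨_, _, _, t₂, Relation.ReflTransGen.refl, hs, ⟨hv₁, rfl, rfl⟩, ⟨hv₂, hr, hw⟩⟩

/-- `(A, w)` is locally ambiguous iff the derivation `A ⇒ w` is ambiguous. -/
theorem stmt3 {T N : Type} [Finite T] [Finite N] [Nonempty N]
    (G : LS2NF T N) (A : N) (w : Sentence T) :
    LocalAmb G A w ↔ Ambiguous G A w := by
  constructor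
  · rintro ⟨H, h, t₁, t₂, hreach, hns, hw₁, hw₂⟩
    exact amb_of_reach (p := (A, w)) (q := (H, h)) hreach
      ⟨t₁, t₂, fun e => hns (e ▸ similar_refl t₁), hw₁, hw₂⟩
  · rintro ⟨t₁, t₂, hne, ⟨hv₁, hr₁, hw₁⟩, ⟨hv₂, hr₂, hw₂⟩⟩
    subst hr₁; subst hw₁
    exact distinct_localAmb t₁ t₂ hne hv₁ hv₂ hr₂ hw₂
end

section
/- Let G = (N, Σ, P, S) be an LS2NF, let A ∈ N and let w be a sentence. If t1 and t2 are two distinct parse trees that both witness A ⇒ w, then there exist a nonterminal H ∈ N, a sentence h, a subtree t1' of t1 and a subtree t2' of t2 such that t1' and t2' both witness H ⇒ h and t1' ≁ t2'. -/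
variable {T N : Type}

private lemma key {T N : Type} (G : LS2NF T N) :
    ∀ t₁ t₂ : ParseTree T N, t₁.Valid G → t₂.Valid G → t₁.root = t₂.root →
      t₁.word = t₂.word → t₁ ≠ t₂ →
      ∃ (H : N) (h : Sentence T) (t₁' t₂' : ParseTree T N),
        IsSubtree t₁' t₁ ∧ IsSubtree t₂' t₂ ∧
        Witness G t₁' H h ∧ Witness G t₂' H h ∧ ¬ ParseSimilar t₁' t₂' := by
  intro t₁
  induction t₁ with
  | eps A =>
    intro t₂ v₁ v₂ hr hw hne
    exact ⟨A, [], _, t₂, .refl _, .refl _, ⟨v₁, rfl, rfl⟩, ⟨v₂, hr.symm, hw.symm⟩,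
      fun hs => hne (by cases hs; rfl)⟩
  | leaf A tok =>
    intro t₂ v₁ v₂ hr hw hne
    exact ⟨A, [tok], _, t₂, .refl _, .refl _, ⟨v₁, rfl, rfl⟩, ⟨v₂, hr.symm, hw.symm⟩,
      fun hs => hne (by cases hs; rfl)⟩
  | unary A s ih =>
    intro t₂ v₁ v₂ hr hw hne
    by_cases hsim : ParseSimilar (ParseTree.unary A s) t₂
    · cases hsim with
      | unary _ hr' hw' =>
        rename_i s'
        have hsne : s ≠ s' := fun h => hne (by rw [h])
        cases v₁ with
        | unary _ _ vs =>
        cases v₂ with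
        | unary _ _ vs' =>
        obtain ⟨H, h, u₁, u₂, sub₁, sub₂, w₁, w₂, hns⟩ := ih s' vs vs' hr' hw' hsne
        exact ⟨H, h, u₁, u₂, .unary _ sub₁, .unary _ sub₂, w₁, w₂, hns⟩
    · exact ⟨A, (ParseTree.unary A s).word, _, t₂, .refl _, .refl _,
        ⟨v₁, rfl, rfl⟩, ⟨v₂, hr.symm, hw.symm⟩, hsim⟩
  | binary A s₁ s₂ ih₁ ih₂ =>
    intro t₂ v₁ v₂ hr hw hne
    by_cases hsim : ParseSimilar (ParseTree.binary A s₁ s₂) t₂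
    · cases hsim with
      | binary _ hr1 hw1 hr2 hw2 =>
        rename_i s₁' s₂'
        cases v₁ with
        | binary _ _ va vb =>
        cases v₂ with
        | binary _ _ va' vb' =>
        by_cases h1 : s₁ = s₁'
        · have h2 : s₂ ≠ s₂' := fun h => hne (by rw [h1, h])
          obtain ⟨H, h, u₁, u₂, sub₁, sub₂, w₁, w₂, hns⟩ := ih₂ s₂' vb vb' hr2 hw2 h2
          exact ⟨H, h, u₁, u₂, .right _ _ sub₁, .right _ _ sub₂, w₁, w₂, hns⟩
        · obtain ⟨H, h, u₁, u₂, sub₁, sub₂, w₁, w₂, hns⟩ := ih₁ s₁' va va' hr1 hw1 h1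
          exact ⟨H, h, u₁, u₂, .left _ _ sub₁, .left _ _ sub₂, w₁, w₂, hns⟩
    · exact ⟨A, (ParseTree.binary A s₁ s₂).word, _, t₂, .refl _, .refl _,
        ⟨v₁, rfl, rfl⟩, ⟨v₂, hr.symm, hw.symm⟩, hsim⟩

/-- If `t₁ ≠ t₂` both witness `A ⇒ w`, then there exist `H`, `h`
and subtrees `t₁'` of `t₁` and `t₂'` of `t₂` both witnessing `H ⇒ h` with `t₁' ≁ t₂'`. -/
theorem stmt4 {T N : Type} [Finite T] [Finite N] [Nonempty N]
    (G : LS2NF T N) (A : N) (w : Sentence T) (t₁ t₂ : ParseTree T N)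
    (hne : t₁ ≠ t₂) (h₁ : Witness G t₁ A w) (h₂ : Witness G t₂ A w) :
    ∃ (H : N) (h : Sentence T) (t₁' t₂' : ParseTree T N),
      IsSubtree t₁' t₁ ∧ IsSubtree t₂' t₂ ∧
      Witness G t₁' H h ∧ Witness G t₂' H h ∧ ¬ ParseSimilar t₁' t₂' := by
  obtain ⟨v₁, hr₁, hw₁⟩ := h₁
  obtain ⟨v₂, hr₂, hw₂⟩ := h₂
  exact key G t₁ t₂ v₁ v₂ (hr₁.trans hr₂.symm) (hw₁.trans hw₂.symm) hne
end

section
/- Let G = (N, Σ, P, S) be an acyclic LS2NF and fix k ≥ 0. If a model m satisfies Φ_D^k, Φ_R^k and Φ_Rε^k, then for every B ∈ N: Rε^B is true if and only if (S, w^m) ⇝ (B, ε). -/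
variable {T N : Type}

section Stmt8Aux

variable {T N : Type}

private lemma wf_of_no_cycle [Finite N] (r : N → N → Prop)
    (h : ∀ a, ¬ Relation.TransGen r a a) : WellFounded r := by
  have h1 : IsIrrefl N (Relation.TransGen r) := ⟨h⟩
  have h2 : IsTrans N (Relation.TransGen r) := ⟨fun _ _ _ => Relation.TransGen.trans⟩
  have hw : WellFounded (Relation.TransGen r) :=
    @Finite.wellFounded_of_trans_of_irrefl N _ _ h2 h1
  exact Subrelation.wf (fun hr => Relation.TransGen.single hr) hw

private lemma acyclic_wf [Finite N] {G : LS2NF T N} (h : Acyclic G) :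
    WellFounded (Edge G) := wf_of_no_cycle _ h

private lemma acyclic_wf_swap [Finite N] {G : LS2NF T N} (h : Acyclic G) :
    WellFounded (Function.swap (Edge G)) :=
  wf_of_no_cycle _ (fun a hc => h a (Relation.transGen_swap.mp hc))

namespace Model

variable {k : ℕ} (m : Model T N k)

private lemma sub_len {x δ : ℕ} (hk : x + δ ≤ k) : (m.sub x δ).length = δ := by
  simp [Model.sub, m.len_eq]; omega

private lemma sub_zero (x : ℕ) : m.sub x 0 = [] := by simp [Model.sub]

private lemma sub_add (x δ₁ δ₂ : ℕ) :
    m.sub x (δ₁ + δ₂) = m.sub x δ₁ ++ m.sub (x + δ₁) δ₂ := by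
  simp [Model.sub, List.take_add, List.drop_drop]

private lemma sub_all : m.sub 0 k = m.word := by
  simp [Model.sub, m.len_eq]

private lemma sub_one {x : ℕ} (hk : x + 1 ≤ k) :
    ∃ tok : Token T, m.word[x]? = some tok ∧ m.sub x 1 = [tok] := by
  have hx : x < m.word.length := by rw [m.len_eq]; omega
  refine ⟨m.word[x], by simp [List.getElem?_eq_getElem hx], ?_⟩
  have : m.sub x 1 = (m.word.drop x).take 1 := rfl
  rw [this, List.take_one]
  have : (m.word.drop x).head? = some m.word[x] := by
    rw [List.head?_eq_getElem?, List.getElem?_drop, Nat.add_zero,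
      List.getElem?_eq_getElem hx]
  simp [this]

private lemma sub_split {x δ : ℕ} {w₁ w₂ : Sentence T} (hk : x + δ ≤ k)
    (h : w₁ ++ w₂ = m.sub x δ) :
    w₁.length + w₂.length = δ ∧ w₁ = m.sub x w₁.length ∧
      w₂ = m.sub (x + w₁.length) w₂.length := by
  have hlen : w₁.length + w₂.length = δ := by
    have := m.sub_len hk
    rw [← h, List.length_append] at this
    exact this
  have hsplit : m.sub x δ = m.sub x w₁.length ++ m.sub (x + w₁.length) w₂.length := by
    rw [← hlen]; exact m.sub_add x _ _
  rw [hsplit] at h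
  have h1 : x + w₁.length ≤ k := by omega
  have := List.append_inj h (by rw [m.sub_len h1])
  exact ⟨hlen, this.1, this.2⟩

end Model

private lemma derives_atom {G : LS2NF T N} {A : N} {tok : Token T}
    (hP : (A, Clause.atom tok.tm) ∈ G.P) : Derives G A [tok] :=
  ⟨.leaf A tok, .leaf hP, rfl, rfl⟩

private lemma derives_unary {G : LS2NF T N} {A B : N} {φ : Sentence T → Prop} {w : Sentence T}
    (hP : (A, Clause.unary B φ) ∈ G.P) (hφ : φ w) (h : Derives G B w) : Derives G A w := by
  obtain ⟨t, hv, hr, hw⟩ := h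
  exact ⟨.unary A t, .unary (by rw [hr]; exact hP) (by rw [hw]; exact hφ) hv, rfl, hw⟩

private lemma derives_binary {G : LS2NF T N} {A B₁ B₂ : N}
    {φ : Sentence T → Sentence T → Prop} {w₁ w₂ : Sentence T}
    (hP : (A, Clause.binary B₁ B₂ φ) ∈ G.P) (hφ : φ w₁ w₂)
    (h₁ : Derives G B₁ w₁) (h₂ : Derives G B₂ w₂) : Derives G A (w₁ ++ w₂) := by
  obtain ⟨t₁, hv₁, hr₁, hw₁⟩ := h₁
  obtain ⟨t₂, hv₂, hr₂, hw₂⟩ := h₂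
  exact ⟨.binary A t₁ t₂,
    .binary (by rw [hr₁, hr₂]; exact hP) (by rw [hw₁, hw₂]; exact hφ) hv₁ hv₂,
    rfl, by simp [ParseTree.word, hw₁, hw₂]⟩

end Stmt8Aux
section Stmt8D
set_option linter.unusedSectionVars false

variable {T N : Type} [Finite N] {G : LS2NF T N} {k : ℕ} {m : Model T N k}

private lemma D_sound (hacyc : Acyclic G) (hD : SatPhiD G m) :
    ∀ δ A x, 0 < δ → x + δ ≤ k → m.D A x δ = true → Derives G A (m.sub x δ) := by
  intro δ
  induction δ using Nat.strong_induction_on with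
  | _ δ IHδ =>
  intro A
  induction A using (acyclic_wf_swap hacyc).induction with
  | _ A IHA =>
  intro x hδ hk hDA
  rcases (hD A x δ hδ hk).mp hDA with
    ⟨a, hP, h1, htm⟩ | ⟨B, φ, hP, hDB, hφ⟩ | ⟨B₁, B₂, φ, hP, hcase⟩
  · subst h1
    obtain ⟨tok, htok, hsub⟩ := m.sub_one hk
    rw [hsub]
    have : tok.tm = a := by
      simp [Model.tmAt, htok] at htm; exact htm
    exact derives_atom (this ▸ hP)
  · exact derives_unary hP hφ (IHA B (Or.inl ⟨φ, hP⟩) x hδ hk hDB)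
  · rcases hcase with ⟨hnull, hDB₂⟩ | ⟨hnull, hDB₁⟩ | ⟨δ', hδ'pos, hδ'lt, hD1, hD2, hφ⟩
    · have h2 := IHA B₂ (Or.inr (Or.inr ⟨B₁, φ, hP, hnull⟩)) x hδ hk hDB₂
      have := derives_binary hP (G.binary_eps_left _ _ _ _ hP _) hnull h2
      simpa using this
    · have h1 := IHA B₁ (Or.inr (Or.inl ⟨B₂, φ, hP, hnull⟩)) x hδ hk hDB₁
      have := derives_binary hP (G.binary_eps_right _ _ _ _ hP _) h1 hnull
      simpa using this
    · have h1 := IHδ δ' hδ'lt B₁ x hδ'pos (by omega) hD1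
      have h2 := IHδ (δ - δ') (by omega) B₂ (x + δ') (by omega) (by omega) hD2
      have := derives_binary hP hφ h1 h2
      rw [← m.sub_add] at this
      have hδeq : δ' + (δ - δ') = δ := by omega
      rwa [hδeq] at this

private lemma D_complete (hD : SatPhiD G m) :
    ∀ t : ParseTree T N, t.Valid G → ∀ x δ, 0 < δ → x + δ ≤ k →
      t.word = m.sub x δ → m.D t.root x δ = true := by
  intro t hv
  induction hv with
  | @eps A hP =>
    intro x δ hδ hk hw
    exfalso
    have := m.sub_len hk
    rw [← hw] at this
    simp [ParseTree.word] at this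
    omega
  | @leaf A tok hP =>
    intro x δ hδ hk hw
    have hlen := m.sub_len hk
    rw [← hw] at hlen
    simp [ParseTree.word] at hlen
    subst hlen
    obtain ⟨tok', htok, hsub⟩ := m.sub_one hk
    rw [hsub] at hw
    simp [ParseTree.word] at hw
    refine (hD A x 1 hδ hk).mpr (Or.inl ⟨tok.tm, hP, rfl, ?_⟩)
    simp [Model.tmAt, htok, hw]
  | @unary A t φ hP hφ hvt IH =>
    intro x δ hδ hk hw
    simp only [ParseTree.word] at hw
    exact (hD A x δ hδ hk).mpr (Or.inr (Or.inl ⟨t.root, φ, hP, IH x δ hδ hk hw, hw ▸ hφ⟩))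
  | @binary A t₁ t₂ φ hP hφ hv₁ hv₂ IH₁ IH₂ =>
    intro x δ hδ hk hw
    simp only [ParseTree.word] at hw
    obtain ⟨hlen, he₁, he₂⟩ := m.sub_split hk hw
    set δ₁ := t₁.word.length with hδ₁
    set δ₂ := t₂.word.length with hδ₂
    refine (hD A x δ hδ hk).mpr (Or.inr (Or.inr ⟨t₁.root, t₂.root, φ, hP, ?_⟩))
    rcases Nat.eq_zero_or_pos δ₁ with h0 | hpos₁
    · have ht₁ : t₁.word = [] := List.length_eq_zero_iff.mp h0
      have : t₂.word = m.sub x δ := by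
        rw [he₂]; congr 1 <;> omega
      exact Or.inl ⟨⟨t₁, hv₁, rfl, ht₁⟩, IH₂ x δ hδ hk this⟩
    rcases Nat.eq_zero_or_pos δ₂ with h0 | hpos₂
    · have ht₂ : t₂.word = [] := List.length_eq_zero_iff.mp h0
      have : t₁.word = m.sub x δ := by
        rw [he₁]; congr 1; omega
      exact Or.inr (Or.inl ⟨⟨t₂, hv₂, rfl, ht₂⟩, IH₁ x δ hδ hk this⟩)
    · refine Or.inr (Or.inr ⟨δ₁, hpos₁, by omega, IH₁ x δ₁ hpos₁ (by omega) he₁, ?_, ?_⟩)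
      · have : t₂.word = m.sub (x + δ₁) (δ - δ₁) := by
          rw [he₂]; congr 1; omega
        exact IH₂ (x + δ₁) (δ - δ₁) (by omega) (by omega) this
      · have h2 : m.sub (x + δ₁) (δ - δ₁) = t₂.word := by
          rw [he₂]; congr 1; omega
        rw [← he₁] at *
        rw [h2]
        exact hφ

private lemma derives_D (hD : SatPhiD G m) {B : N} {v : Sentence T} {x δ : ℕ}
    (h : Derives G B v) (hv : v = m.sub x δ) (hδ : 0 < δ) (hk : x + δ ≤ k) :
    m.D B x δ = true := by
  obtain ⟨t, hvt, hr, hw⟩ := h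
  exact hr ▸ D_complete hD t hvt x δ hδ hk (hw.trans hv)

end Stmt8D
section Stmt8R
set_option linter.unusedSectionVars false

variable {T N : Type} [Finite N] {G : LS2NF T N} {k : ℕ} {m : Model T N k}

private lemma R_sound (hacyc : Acyclic G) (hD : SatPhiD G m) (hR : SatPhiR G m) :
    ∀ n B x δ, 0 < δ → x + δ ≤ k → k - δ ≤ n → m.R B x δ = true →
      Reach G (G.S, m.word) (B, m.sub x δ) := by
  intro n
  induction n using Nat.strong_induction_on with
  | _ n IHn =>
  intro B
  induction B using (acyclic_wf hacyc).induction with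
  | _ B IHB =>
  intro x δ hδ hk hn hRB
  rcases (hR B x δ hδ hk).mp hRB with
    ⟨hBS, hx0, hδk⟩ | ⟨A, φ, hP, hRA, hφ⟩ |
    ⟨A, B', φ, δ', hP, hkk, hRA, hcond, hφ⟩ | ⟨A, B', φ, δ', hP, hδ'x, hRA, hcond, hφ⟩
  · subst hBS; subst hx0; subst hδk
    rw [m.sub_all]
    exact Relation.ReflTransGen.refl
  · have hre := IHB A (Or.inl ⟨φ, hP⟩) x δ hδ hk hn hRA
    exact hre.tail (StepReach.unary hP hφ)
  · -- A → B ⟨φ⟩ B'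
    rcases Nat.eq_zero_or_pos δ' with h0 | hpos
    · subst h0
      rw [if_pos rfl] at hcond
      have hre := IHB A (Or.inr (Or.inl ⟨B', φ, hP, hcond⟩)) x δ hδ hk hn
        (by rwa [Nat.add_zero] at hRA)
      have hstep : StepReach G (A, m.sub x δ ++ m.sub (x + δ) 0) (B, m.sub x δ) :=
        StepReach.left hP hφ (by rw [m.sub_zero]; exact hcond)
      rw [m.sub_zero, List.append_nil] at hstep
      exact hre.tail hstep
    · rw [if_neg (by omega)] at hcond
      have hlt : k - (δ + δ') < n := by omega
      have hre := IHn (k - (δ + δ')) hlt A x (δ + δ') (by omega) (by omega) le_rfl hRA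
      rw [m.sub_add] at hre
      exact hre.tail (StepReach.left hP hφ
        (D_sound hacyc hD δ' B' (x + δ) hpos (by omega) hcond))
  · -- A → B' ⟨φ⟩ B
    rcases Nat.eq_zero_or_pos δ' with h0 | hpos
    · subst h0
      rw [if_pos rfl] at hcond
      have hre := IHB A (Or.inr (Or.inr ⟨B', φ, hP, hcond⟩)) x δ hδ hk hn
        (by rwa [Nat.sub_zero, Nat.zero_add] at hRA)
      have hstep : StepReach G (A, m.sub (x - 0) 0 ++ m.sub x δ) (B, m.sub x δ) :=
        StepReach.right hP hφ (by rw [m.sub_zero]; exact hcond)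
      rw [m.sub_zero, List.nil_append] at hstep
      exact hre.tail hstep
    · rw [if_neg (by omega)] at hcond
      have hkk : x - δ' + (δ' + δ) ≤ k := by omega
      have hlt : k - (δ' + δ) < n := by omega
      have hre := IHn (k - (δ' + δ)) hlt A (x - δ') (δ' + δ) (by omega) hkk le_rfl hRA
      rw [m.sub_add] at hre
      have hx : x - δ' + δ' = x := by omega
      rw [hx] at hre
      exact hre.tail (StepReach.right hP hφ
        (D_sound hacyc hD δ' B' (x - δ') hpos (by omega) hcond))

private lemma Re_sound (hacyc : Acyclic G) (hD : SatPhiD G m) (hR : SatPhiR G m)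
    (hRe : SatPhiRe G m) : ∀ B, m.Re B = true → Reach G (G.S, m.word) (B, []) := by
  intro B
  induction B using (acyclic_wf hacyc).induction with
  | _ B IHB =>
  intro hReB
  rcases (hRe B).mp hReB with
    ⟨hBS, hk0⟩ | ⟨A, φ, hP, hReA⟩ | ⟨A, B', φ, hcl, hcase⟩
  · subst hBS
    have : m.word = [] := List.length_eq_zero_iff.mp (by rw [m.len_eq, hk0])
    rw [this]
    exact Relation.ReflTransGen.refl
  · have hre := IHB A (Or.inl ⟨φ, hP⟩) hReA
    exact hre.tail (StepReach.unary hP (G.unary_eps _ _ _ hP))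
  · rcases hcase with ⟨hReA, hnull⟩ | ⟨x, δ, hδ, hk, hRA, hDB'⟩
    · rcases hcl with hP | hP
      · have hre := IHB A (Or.inr (Or.inl ⟨B', φ, hP, hnull⟩)) hReA
        have hstep : StepReach G (A, ([] : Sentence T) ++ []) (B, []) :=
          StepReach.left hP (G.binary_eps_left _ _ _ _ hP _) hnull
        rw [List.append_nil] at hstep
        exact hre.tail hstep
      · have hre := IHB A (Or.inr (Or.inr ⟨B', φ, hP, hnull⟩)) hReA
        have hstep : StepReach G (A, ([] : Sentence T) ++ []) (B, []) :=
          StepReach.right hP (G.binary_eps_right _ _ _ _ hP _) hnull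
        rw [List.append_nil] at hstep
        exact hre.tail hstep
    · have hre := R_sound hacyc hD hR k A x δ hδ hk (by omega) hRA
      have hder : Derives G B' (m.sub x δ) :=
        D_sound hacyc hD δ B' x hδ hk hDB'
      rcases hcl with hP | hP
      · have hstep : StepReach G (A, ([] : Sentence T) ++ m.sub x δ) (B, []) :=
          StepReach.left hP (G.binary_eps_left _ _ _ _ hP _) hder
        rw [List.nil_append] at hstep
        exact hre.tail hstep
      · have hstep : StepReach G (A, m.sub x δ ++ ([] : Sentence T)) (B, []) :=
          StepReach.right hP (G.binary_eps_right _ _ _ _ hP _) hder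
        rw [List.append_nil] at hstep
        exact hre.tail hstep

end Stmt8R
section Stmt8Inv
set_option linter.unusedSectionVars false

variable {T N : Type} [Finite N] {G : LS2NF T N} {k : ℕ} {m : Model T N k}

private lemma reach_inv (hD : SatPhiD G m) (hR : SatPhiR G m) (hRe : SatPhiRe G m) :
    ∀ p, Reach G (G.S, m.word) p →
      ∃ x δ, x + δ ≤ k ∧ p.2 = m.sub x δ ∧
        ((δ = 0 ∧ m.Re p.1 = true) ∨ (0 < δ ∧ m.R p.1 x δ = true)) := by
  intro p h
  induction h with
  | refl =>
    refine ⟨0, k, by omega, (m.sub_all).symm, ?_⟩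
    rcases Nat.eq_zero_or_pos k with h0 | hpos
    · exact Or.inl ⟨h0, (hRe G.S).mpr (Or.inl ⟨rfl, h0⟩)⟩
    · exact Or.inr ⟨hpos, (hR G.S 0 k hpos (by omega)).mpr (Or.inl ⟨rfl, rfl, rfl⟩)⟩
  | @tail c p hre hstep ih =>
    obtain ⟨x, δ, hk, hw, hcase⟩ := ih
    cases hstep with
    | @unary A B φ w hP hφ =>
      refine ⟨x, δ, hk, hw, ?_⟩
      rcases hcase with ⟨h0, hReA⟩ | ⟨hpos, hRA⟩
      · exact Or.inl ⟨h0, (hRe B).mpr (Or.inr (Or.inl ⟨A, φ, hP, hReA⟩))⟩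
      · exact Or.inr ⟨hpos, (hR B x δ hpos hk).mpr
          (Or.inr (Or.inl ⟨A, φ, hP, hRA, hw ▸ hφ⟩))⟩
    | @left A B B' φ w₁ w₂ hP hφ hder =>
      simp only at hw
      obtain ⟨hlen, he₁, he₂⟩ := m.sub_split hk hw
      set δ₁ := w₁.length with hδ₁
      set δ₂ := w₂.length with hδ₂
      refine ⟨x, δ₁, by omega, he₁, ?_⟩
      rcases hcase with ⟨h0, hReA⟩ | ⟨hpos, hRA⟩
      · -- δ = 0, so δ₁ = δ₂ = 0
        have hw₂ : w₂ = [] := List.length_eq_zero_iff.mp (by omega)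
        refine Or.inl ⟨by omega, (hRe B).mpr (Or.inr (Or.inr
          ⟨A, B', φ, Or.inl hP, Or.inl ⟨hReA, show Derives G B' [] from hw₂ ▸ hder⟩⟩))⟩
      · rcases Nat.eq_zero_or_pos δ₁ with h10 | hpos₁
        · -- B at [], use Rε via R A x δ ∧ D B' x δ
          have hw₂' : w₂ = m.sub x δ := by
            rw [he₂]; congr 1 <;> omega
          refine Or.inl ⟨h10, (hRe B).mpr (Or.inr (Or.inr
            ⟨A, B', φ, Or.inl hP, Or.inr ⟨x, δ, hpos, hk,
              hRA, derives_D hD hder hw₂' hpos hk⟩⟩))⟩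
        · refine Or.inr ⟨hpos₁, (hR B x δ₁ hpos₁ (by omega)).mpr
            (Or.inr (Or.inr (Or.inl ⟨A, B', φ, δ₂, hP, by omega, ?_, ?_, ?_⟩)))⟩
          · have : δ₁ + δ₂ = δ := by omega
            rw [this]; exact hRA
          · rcases Nat.eq_zero_or_pos δ₂ with h20 | hpos₂
            · rw [if_pos h20]
              have hw₂ : w₂ = [] := List.length_eq_zero_iff.mp (by omega)
              exact (show Derives G B' [] from hw₂ ▸ hder)
            · rw [if_neg (by omega)]
              exact derives_D hD hder he₂ hpos₂ (by omega)
          · rw [← he₁, ← he₂]; exact hφ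
    | @right A B B' φ w₁ w₂ hP hφ hder =>
      simp only at hw
      obtain ⟨hlen, he₁, he₂⟩ := m.sub_split hk hw
      set δ₁ := w₁.length with hδ₁
      set δ₂ := w₂.length with hδ₂
      refine ⟨x + δ₁, δ₂, by omega, he₂, ?_⟩
      rcases hcase with ⟨h0, hReA⟩ | ⟨hpos, hRA⟩
      · have hw₁ : w₁ = [] := List.length_eq_zero_iff.mp (by omega)
        refine Or.inl ⟨by omega, (hRe B).mpr (Or.inr (Or.inr
          ⟨A, B', φ, Or.inr hP, Or.inl ⟨hReA, show Derives G B' [] from hw₁ ▸ hder⟩⟩))⟩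
      · rcases Nat.eq_zero_or_pos δ₂ with h20 | hpos₂
        · -- w₂ = [], δ₁ = δ > 0
          have hw₁' : w₁ = m.sub x δ := by
            rw [he₁]; congr 1; omega
          refine Or.inl ⟨h20, (hRe B).mpr (Or.inr (Or.inr
            ⟨A, B', φ, Or.inr hP, Or.inr ⟨x, δ, hpos, hk,
              hRA, derives_D hD hder hw₁' hpos hk⟩⟩))⟩
        · refine Or.inr ⟨hpos₂, (hR B (x + δ₁) δ₂ hpos₂ (by omega)).mpr
            (Or.inr (Or.inr (Or.inr ⟨A, B', φ, δ₁, hP, by omega, ?_, ?_, ?_⟩)))⟩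
          · have h1 : x + δ₁ - δ₁ = x := by omega
            have h2 : δ₁ + δ₂ = δ := by omega
            rw [h1, h2]; exact hRA
          · rcases Nat.eq_zero_or_pos δ₁ with h10 | hpos₁
            · rw [if_pos h10]
              have hw₁ : w₁ = [] := List.length_eq_zero_iff.mp (by omega)
              exact (show Derives G B' [] from hw₁ ▸ hder)
            · rw [if_neg (by omega)]
              have h1 : x + δ₁ - δ₁ = x := by omega
              rw [h1]
              exact derives_D hD hder he₁ hpos₁ (by omega)
          · have h1 : x + δ₁ - δ₁ = x := by omega
            rw [h1, ← he₁, ← he₂]; exact hφ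

end Stmt8Inv

/-- if `m ⊨ Φ_D^k ∧ Φ_R^k ∧ Φ_Rε^k` then
`Rε^B` is true iff `(S, w^m) ⇝ (B, ε)`. -/
theorem stmt8 {T N : Type} [Finite T] [Finite N] [Nonempty N]
    (G : LS2NF T N) (hacyc : Acyclic G) (k : ℕ) (m : Model T N k)
    (hD : SatPhiD G m) (hR : SatPhiR G m) (hRe : SatPhiRe G m) :
    ∀ B : N, (m.Re B = true ↔ Reach G (G.S, m.word) (B, [])) := by
  intro B
  constructor
  · exact Re_sound hacyc hD hR hRe B
  · intro h
    obtain ⟨x, δ, hk, hw, hcase⟩ := reach_inv hD hR hRe (B, []) h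
    simp only at hw
    have hδ0 : δ = 0 := by
      have := m.sub_len hk
      rw [← hw] at this
      simpa using this.symm
    rcases hcase with ⟨_, hRe⟩ | ⟨hpos, _⟩
    · exact hRe
    · omega
end

section
/- Completeness of the encoding: let G = (N, Σ, P, S) be an acyclic LS2NF and fix k ≥ 0. If there exists a sentence w with |w| = k such that the derivation S ⇒ w is ambiguous, then there exists a model m satisfying Φ_amb^k. -/
variable {T N : Type}

/-! ### Auxiliary development for the completeness proof -/

namespace Stmt12Aux

open scoped Classical

variable {T N : Type}

/-- `w_{x,δ}` as a function of a plain sentence. -/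
def sub (w : Sentence T) (x δ : ℕ) : Sentence T := (w.drop x).take δ

lemma sub_zero (w : Sentence T) (x : ℕ) : sub w x 0 = [] := rfl

lemma length_sub {w : Sentence T} {x δ : ℕ} (h : x + δ ≤ w.length) :
    (sub w x δ).length = δ := by
  simp [sub]; omega

lemma sub_split {w w₁ w₂ : Sentence T} {x δ : ℕ}
    (h : w₁ ++ w₂ = sub w x δ) (hδ : δ = w₁.length + w₂.length) :
    w₁ = sub w x w₁.length ∧ w₂ = sub w (x + w₁.length) w₂.length := by
  constructor
  · have h1 : sub w x w₁.length = (sub w x δ).take w₁.length := by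
      simp [sub, List.take_take]; omega
    rw [h1, ← h, List.take_left']
    rfl
  · have h1 : sub w (x + w₁.length) w₂.length = (sub w x δ).drop w₁.length := by
      simp only [sub, List.drop_take, List.drop_drop]
      congr 1
      omega
    rw [h1, ← h, List.drop_left']
    rfl

lemma getElem?_of_sub {w : Sentence T} {x : ℕ} {tok : Token T}
    (h : sub w x 1 = [tok]) : w[x]? = some tok := by
  unfold sub at h
  cases hd : w.drop x with
  | nil => rw [hd] at h; simp at h
  | cons a l =>
    rw [hd] at h
    simp at h
    subst h
    have : (w.drop x)[0]? = some a := by rw [hd]; simp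
    rwa [List.getElem?_drop, Nat.add_zero] at this

lemma nullable_of_tree {G : LS2NF T N} {t : ParseTree T N}
    (hv : t.Valid G) (h : t.word = []) : Nullable G t.root :=
  ⟨t, hv, rfl, h⟩

/-- Positional derivability, mirroring `Φ_D`. -/
inductive PD (G : LS2NF T N) (w : Sentence T) : N → ℕ → ℕ → Prop
  | atom {A a x δ} : (A, Clause.atom a) ∈ G.P → δ = 1 →
      (w[x]?).map Token.tm = some a → PD G w A x δ
  | unary {A B φ x δ} : (A, Clause.unary B φ) ∈ G.P → PD G w B x δ →
      φ (sub w x δ) → PD G w A x δ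
  | binNullL {A B₁ B₂ φ x δ} : (A, Clause.binary B₁ B₂ φ) ∈ G.P →
      Nullable G B₁ → PD G w B₂ x δ → PD G w A x δ
  | binNullR {A B₁ B₂ φ x δ} : (A, Clause.binary B₁ B₂ φ) ∈ G.P →
      Nullable G B₂ → PD G w B₁ x δ → PD G w A x δ
  | binSplit {A B₁ B₂ φ x δ δ'} : (A, Clause.binary B₁ B₂ φ) ∈ G.P →
      0 < δ' → δ' < δ → PD G w B₁ x δ' → PD G w B₂ (x + δ') (δ - δ') →
      φ (sub w x δ') (sub w (x + δ') (δ - δ')) → PD G w A x δ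

/-- Positional reachability, mirroring `Φ_R`. -/
inductive PR (G : LS2NF T N) (w : Sentence T) : N → ℕ → ℕ → Prop
  | start {B x δ} : B = G.S → x = 0 → δ = w.length → PR G w B x δ
  | unary {A B φ x δ} : (A, Clause.unary B φ) ∈ G.P → PR G w A x δ →
      φ (sub w x δ) → PR G w B x δ
  | left {A B B' φ x δ δ'} : (A, Clause.binary B B' φ) ∈ G.P →
      x + δ + δ' ≤ w.length → PR G w A x (δ + δ') →
      (if δ' = 0 then Nullable G B' else PD G w B' (x + δ) δ') →
      φ (sub w x δ) (sub w (x + δ) δ') → PR G w B x δ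
  | right {A B B' φ x δ δ'} : (A, Clause.binary B' B φ) ∈ G.P →
      δ' ≤ x → PR G w A (x - δ') (δ' + δ) →
      (if δ' = 0 then Nullable G B' else PD G w B' (x - δ') δ') →
      φ (sub w (x - δ') δ') (sub w x δ) → PR G w B x δ

/-- Emptiness reachability, mirroring `Φ_Rε`. -/
inductive PRe (G : LS2NF T N) (w : Sentence T) : N → Prop
  | start {B} : B = G.S → w.length = 0 → PRe G w B
  | unary {A B φ} : (A, Clause.unary B φ) ∈ G.P → PRe G w A → PRe G w B
  | binL {A B B' φ} : (A, Clause.binary B B' φ) ∈ G.P → PRe G w A →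
      Nullable G B' → PRe G w B
  | binR {A B B' φ} : (A, Clause.binary B' B φ) ∈ G.P → PRe G w A →
      Nullable G B' → PRe G w B
  | binDL {A B B' φ x δ} : (A, Clause.binary B B' φ) ∈ G.P → 0 < δ →
      x + δ ≤ w.length → PR G w A x δ → PD G w B' x δ → PRe G w B
  | binDR {A B B' φ x δ} : (A, Clause.binary B' B φ) ∈ G.P → 0 < δ →
      x + δ ≤ w.length → PR G w A x δ → PD G w B' x δ → PRe G w B

/-- The canonical model built from a sentence. -/
noncomputable def mk (G : LS2NF T N) (w : Sentence T) : Model T N w.length where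
  word := w
  len_eq := rfl
  D := fun A x δ => decide (PD G w A x δ)
  Re := fun B => decide (PRe G w B)
  R := fun B x δ => decide (PR G w B x δ)

lemma mk_D {G : LS2NF T N} {w : Sentence T} {A x δ} :
    (mk G w).D A x δ = true ↔ PD G w A x δ := by
  simp [mk]

lemma mk_R {G : LS2NF T N} {w : Sentence T} {A x δ} :
    (mk G w).R A x δ = true ↔ PR G w A x δ := by
  simp [mk]

lemma mk_Re {G : LS2NF T N} {w : Sentence T} {A} :
    (mk G w).Re A = true ↔ PRe G w A := by
  simp [mk]

lemma mk_sub {G : LS2NF T N} {w : Sentence T} {x δ} :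
    (mk G w).sub x δ = sub w x δ := rfl

lemma mk_tmAt {G : LS2NF T N} {w : Sentence T} {x} :
    (mk G w).tmAt x = (w[x]?).map Token.tm := rfl

/-- Completeness for `D`: a valid parse tree of a subword yields `PD`. -/
lemma pd_complete {G : LS2NF T N} {w : Sentence T} {t : ParseTree T N}
    (hv : t.Valid G) :
    ∀ x, t.word = sub w x t.word.length → t.word ≠ [] →
      PD G w t.root x t.word.length := by
  induction hv with
  | @eps A _ =>
    intro x _ hne; exact absurd rfl hne
  | @leaf A tok hrule =>
    intro x hsub _
    exact PD.atom hrule rfl (by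
      have := getElem?_of_sub (w := w) (x := x) (tok := tok) hsub.symm
      rw [this]; rfl)
  | @unary A t φ hrule hφ hvt ih =>
    intro x hsub hne
    have h1 : (ParseTree.unary A t).word = t.word := rfl
    rw [h1] at hsub hne ⊢
    exact PD.unary hrule (ih x hsub hne) (hsub ▸ hφ)
  | @binary A t₁ t₂ φ hrule hφ hv₁ hv₂ ih₁ ih₂ =>
    intro x hsub hne
    have hw : (ParseTree.binary A t₁ t₂).word = t₁.word ++ t₂.word := rfl
    rw [hw] at hsub hne ⊢
    rw [List.length_append] at hsub ⊢
    obtain ⟨h1, h2⟩ := sub_split hsub rfl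
    show PD G w A x (t₁.word.length + t₂.word.length)
    rcases eq_or_ne t₁.word [] with he₁ | he₁
    · have hn : Nullable G t₁.root := nullable_of_tree hv₁ he₁
      have h2' : t₂.word = sub w x (t₁.word.length + t₂.word.length) := by
        rw [he₁] at hsub; simpa [he₁] using hsub
      have hne₂ : t₂.word ≠ [] := by simp [he₁] at hne; exact hne
      have := ih₂ x (by rw [he₁] at h2'; simpa using h2') hne₂
      have hlen : t₁.word.length + t₂.word.length = t₂.word.length := by
        rw [he₁]; simp
      rw [hlen]
      exact PD.binNullL hrule hn this
    · rcases eq_or_ne t₂.word [] with he₂ | he₂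
      · have hn : Nullable G t₂.root := nullable_of_tree hv₂ he₂
        have h1' : t₁.word = sub w x (t₁.word.length + t₂.word.length) := by
          rw [he₂] at hsub; simpa [he₂] using hsub
        have := ih₁ x (by rw [he₂] at h1'; simpa using h1') he₁
        have hlen : t₁.word.length + t₂.word.length = t₁.word.length := by
          rw [he₂]; simp
        rw [hlen]
        exact PD.binNullR hrule hn this
      · have p1 := ih₁ x h1 he₁
        have p2 := ih₂ (x + t₁.word.length) h2 he₂
        refine PD.binSplit hrule ?_ ?_ p1 ?_ ?_
        · exact List.length_pos_iff.mpr he₁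
        · have := List.length_pos_iff.mpr he₂; omega
        · have hl : t₁.word.length + t₂.word.length - t₁.word.length
              = t₂.word.length := by omega
          rw [hl]; exact p2
        · have hl : t₁.word.length + t₂.word.length - t₁.word.length
              = t₂.word.length := by omega
          rw [hl, ← h1, ← h2]; exact hφ

/-- `m ⊨ Φ_D` for the canonical model. -/
lemma satD (G : LS2NF T N) (w : Sentence T) : SatPhiD G (mk G w) := by
  intro A x δ _ _
  rw [mk_D]
  constructor
  · intro h
    cases h with
    | atom hrule hδ ha => exact Or.inl ⟨_, hrule, hδ, ha⟩
    | unary hrule hpd hφ =>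
      exact Or.inr (Or.inl ⟨_, _, hrule, mk_D.mpr hpd, hφ⟩)
    | binNullL hrule hn hpd =>
      exact Or.inr (Or.inr ⟨_, _, _, hrule, Or.inl ⟨hn, mk_D.mpr hpd⟩⟩)
    | binNullR hrule hn hpd =>
      exact Or.inr (Or.inr ⟨_, _, _, hrule, Or.inr (Or.inl ⟨hn, mk_D.mpr hpd⟩)⟩)
    | @binSplit _ _ _ _ _ _ δ' hrule h0 h1 p1 p2 hφ =>
      exact Or.inr (Or.inr ⟨_, _, _, hrule, Or.inr (Or.inr
        ⟨δ', h0, h1, mk_D.mpr p1, mk_D.mpr p2, hφ⟩)⟩)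
  · rintro (⟨a, hrule, hδ, ha⟩ | ⟨B, φ, hrule, hd, hφ⟩ |
      ⟨B₁, B₂, φ, hrule, (⟨hn, hd⟩ | ⟨hn, hd⟩ | ⟨δ', h0, h1, d1, d2, hφ⟩)⟩)
    · exact PD.atom hrule hδ ha
    · exact PD.unary hrule (mk_D.mp hd) hφ
    · exact PD.binNullL hrule hn (mk_D.mp hd)
    · exact PD.binNullR hrule hn (mk_D.mp hd)
    · exact PD.binSplit hrule h0 h1 (mk_D.mp d1) (mk_D.mp d2) hφ

/-- `m ⊨ Φ_R` for the canonical model. -/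
lemma satR (G : LS2NF T N) (w : Sentence T) : SatPhiR G (mk G w) := by
  intro B x δ _ _
  rw [mk_R]
  have hif : ∀ (c : Prop) [Decidable c] (P : Prop) (b : Bool),
      (b = true ↔ P) → ((if c then Nullable G B else b = true) ↔
        (if c then Nullable G B else P)) := by
    intro c _ P b hb; split <;> simp [hb]
  constructor
  · intro h
    cases h with
    | start h1 h2 h3 => exact Or.inl ⟨h1, h2, h3⟩
    | unary hrule hr hφ => exact Or.inr (Or.inl ⟨_, _, hrule, mk_R.mpr hr, hφ⟩)
    | @left A _ B' φ _ _ δ' hrule hb hr hn hφ =>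
      refine Or.inr (Or.inr (Or.inl ⟨A, B', φ, δ', hrule, hb, mk_R.mpr hr, ?_, hφ⟩))
      split at hn <;> simp_all [mk_D]
    | @right A _ B' φ _ _ δ' hrule hb hr hn hφ =>
      refine Or.inr (Or.inr (Or.inr ⟨A, B', φ, δ', hrule, hb, mk_R.mpr hr, ?_, hφ⟩))
      split at hn <;> simp_all [mk_D]
  · rintro (⟨h1, h2, h3⟩ | ⟨A, φ, hrule, hr, hφ⟩ |
      ⟨A, B', φ, δ', hrule, hb, hr, hn, hφ⟩ | ⟨A, B', φ, δ', hrule, hb, hr, hn, hφ⟩)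
    · exact PR.start h1 h2 (h3.trans (mk G w).len_eq.symm)
    · exact PR.unary hrule (mk_R.mp hr) hφ
    · refine PR.left hrule (by simpa using hb) (mk_R.mp hr) ?_ hφ
      split at hn <;> simp_all [mk_D]
    · refine PR.right hrule hb (mk_R.mp hr) ?_ hφ
      split at hn <;> simp_all [mk_D]

/-- `m ⊨ Φ_Rε` for the canonical model. -/
lemma satRe (G : LS2NF T N) (w : Sentence T) : SatPhiRe G (mk G w) := by
  intro B
  rw [mk_Re]
  constructor
  · intro h
    cases h with
    | start h1 h2 => exact Or.inl ⟨h1, h2⟩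
    | unary hrule hr => exact Or.inr (Or.inl ⟨_, _, hrule, mk_Re.mpr hr⟩)
    | binL hrule hr hn =>
      exact Or.inr (Or.inr ⟨_, _, _, Or.inl hrule, Or.inl ⟨mk_Re.mpr hr, hn⟩⟩)
    | binR hrule hr hn =>
      exact Or.inr (Or.inr ⟨_, _, _, Or.inr hrule, Or.inl ⟨mk_Re.mpr hr, hn⟩⟩)
    | @binDL _ _ B' φ x δ hrule h0 hb hr hd =>
      exact Or.inr (Or.inr ⟨_, B', φ, Or.inl hrule,
        Or.inr ⟨x, δ, h0, by simpa using hb, mk_R.mpr hr, mk_D.mpr hd⟩⟩)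
    | @binDR _ _ B' φ x δ hrule h0 hb hr hd =>
      exact Or.inr (Or.inr ⟨_, B', φ, Or.inr hrule,
        Or.inr ⟨x, δ, h0, by simpa using hb, mk_R.mpr hr, mk_D.mpr hd⟩⟩)
  · rintro (⟨h1, h2⟩ | ⟨A, φ, hrule, hr⟩ |
      ⟨A, B', φ, (hrule | hrule), (⟨hr, hn⟩ | ⟨x, δ, h0, hb, hr, hd⟩)⟩)
    · exact PRe.start h1 h2
    · exact PRe.unary hrule (mk_Re.mp hr)
    · exact PRe.binL hrule (mk_Re.mp hr) hn
    · exact PRe.binDL hrule h0 (by simpa using hb) (mk_R.mp hr) (mk_D.mp hd)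
    · exact PRe.binR hrule (mk_Re.mp hr) hn
    · exact PRe.binDR hrule h0 (by simpa using hb) (mk_R.mp hr) (mk_D.mp hd)

/-- The using clause read off from the top of a parse tree. -/
inductive Matches : ParseTree T N → UClause T N → Prop
  | eps (A : N) : Matches (.eps A) .eps
  | leaf (A : N) (tok : Token T) : Matches (.leaf A tok) (.atom tok.tm)
  | unary (A : N) (c : ParseTree T N) (φ) : Matches (.unary A c) (.unary c.root φ)
  | binary (A : N) (c₁ c₂ : ParseTree T N) (φ) :
      Matches (.binary A c₁ c₂) (.binary c₁.root c₁.word.length φ c₂.root)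

lemma matches_ne {s₁ s₂ : ParseTree T N} {γ₁ γ₂ : UClause T N}
    (h₁ : Matches s₁ γ₁) (h₂ : Matches s₂ γ₂)
    (hroot : s₁.root = s₂.root) (hword : s₁.word = s₂.word)
    (hsim : ¬ ParseSimilar s₁ s₂) : γ₁ ≠ γ₂ := by
  cases h₁ with
  | eps A =>
    cases h₂ with
    | eps A' =>
      intro _
      have hr : A = A' := hroot
      subst hr
      exact hsim (ParseSimilar.eps A)
    | leaf A' tok => intro he; simp at he
    | unary A' c φ => intro he; simp at he
    | binary A' c₁ c₂ φ => intro he; simp at he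
  | leaf A tok =>
    cases h₂ with
    | eps A' => intro he; simp at he
    | leaf A' tok' =>
      intro _
      have hr : A = A' := hroot
      have hw : [tok] = [tok'] := hword
      have ht : tok = tok' := by simpa using hw
      subst hr; subst ht
      exact hsim (ParseSimilar.leaf A tok)
    | unary A' c φ => intro he; simp at he
    | binary A' c₁ c₂ φ => intro he; simp at he
  | unary A c φ =>
    cases h₂ with
    | eps A' => intro he; simp at he
    | leaf A' tok => intro he; simp at he
    | unary A' c' φ' =>
      intro he
      injection he with h1 _
      have hr : A = A' := hroot
      have hw : c.word = c'.word := hword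
      subst hr
      exact hsim (ParseSimilar.unary A h1 hw)
    | binary A' c₁ c₂ φ' => intro he; simp at he
  | binary A c₁ c₂ φ =>
    cases h₂ with
    | eps A' => intro he; simp at he
    | leaf A' tok => intro he; simp at he
    | unary A' c φ' => intro he; simp at he
    | binary A' c₁' c₂' φ' =>
      intro he
      injection he with e1 e2 _ e4
      have hr : A = A' := hroot
      have hw : c₁.word ++ c₂.word = c₁'.word ++ c₂'.word := hword
      obtain ⟨w1, w2⟩ := List.append_inj hw e2
      subst hr
      exact hsim (ParseSimilar.binary A e1 w1 e4 w2)

/-- Every valid parse tree of a subword yields a matching satisfied using clause. -/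
lemma clause_exists {G : LS2NF T N} {w : Sentence T} {s : ParseTree T N}
    (hv : s.Valid G) (x δ : ℕ) (hw : s.word = sub w x δ)
    (hδ : δ = s.word.length) (hb : x + δ ≤ w.length) :
    ∃ γ, Matches s γ ∧ InGamma G s.root δ γ ∧ USem G (mk G w) x δ γ := by
  cases hv with
  | @eps A hrule =>
    refine ⟨.eps, Matches.eps A, hrule, ?_⟩
    exact hδ
  | @leaf A tok hrule =>
    have hδ1 : δ = 1 := hδ
    refine ⟨.atom tok.tm, Matches.leaf A tok, hrule, hδ1, ?_⟩
    rw [mk_tmAt, getElem?_of_sub (by rw [← hδ1, ← hw]; rfl)]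
    rfl
  | @unary A c φ hrule hφ hvc =>
    refine ⟨.unary c.root φ, Matches.unary A c φ, hrule, ?_⟩
    have hwc : c.word = sub w x δ := hw
    have hδc : δ = c.word.length := hδ
    simp only [USem]
    split
    · next h0 =>
      exact nullable_of_tree hvc (by rw [h0] at hδc; exact List.length_eq_zero_iff.mp hδc.symm)
    · next h0 =>
      refine ⟨mk_D.mpr ?_, by rw [mk_sub, ← hwc]; exact hφ⟩
      have := pd_complete (w := w) hvc x (by rw [← hδc]; exact hwc)
        (by intro hnil; rw [hnil] at hδc; simp at hδc; exact h0 hδc)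
      rwa [← hδc] at this
  | @binary A c₁ c₂ φ hrule hφ hv₁ hv₂ =>
    have hwc : c₁.word ++ c₂.word = sub w x δ := hw
    have hδc : δ = c₁.word.length + c₂.word.length := by
      rw [hδ]; exact List.length_append
    obtain ⟨h1, h2⟩ := sub_split hwc (by omega)
    refine ⟨.binary c₁.root c₁.word.length φ c₂.root,
      Matches.binary A c₁ c₂ φ, ⟨hrule, by omega⟩, ?_, ?_, ?_⟩
    · rw [mk_sub, mk_sub, ← h1]
      have : δ - c₁.word.length = c₂.word.length := by omega
      rw [this, ← h2]
      exact hφ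
    · split
      · next h0 => exact nullable_of_tree hv₁ (List.length_eq_zero_iff.mp h0)
      · next h0 =>
        exact mk_D.mpr (pd_complete hv₁ x h1
          (fun hnil => h0 (by rw [hnil]; rfl)))
    · split
      · next h0 =>
        refine nullable_of_tree hv₂ (List.length_eq_zero_iff.mp ?_)
        omega
      · next h0 =>
        have hne : c₂.word ≠ [] := by
          intro hnil
          apply h0
          rw [hnil] at hδc; simp at hδc; omega
        have := pd_complete (w := w) hv₂ (x + c₁.word.length) h2 hne
        have hl : δ - c₁.word.length = c₂.word.length := by omega
        rw [hl]
        exact mk_D.mpr this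

/-- Two dissimilar witnesses give `Φ_multi`. -/
lemma multi_of_dissimilar {G : LS2NF T N} {w : Sentence T}
    {s₁ s₂ : ParseTree T N} {H : N} {x δ : ℕ}
    (hv₁ : s₁.Valid G) (hv₂ : s₂.Valid G)
    (hr₁ : s₁.root = H) (hr₂ : s₂.root = H)
    (hw₁ : s₁.word = sub w x δ) (hw₂ : s₂.word = sub w x δ)
    (hδ : δ = s₁.word.length) (hb : x + δ ≤ w.length)
    (hsim : ¬ ParseSimilar s₁ s₂) : PhiMulti G (mk G w) H x δ := by
  obtain ⟨γ₁, hm₁, hg₁, hs₁⟩ := clause_exists hv₁ x δ hw₁ hδ hb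
  obtain ⟨γ₂, hm₂, hg₂, hs₂⟩ := clause_exists hv₂ x δ hw₂
    (by rw [hδ, hw₁, hw₂]) hb
  exact ⟨γ₁, γ₂, matches_ne hm₁ hm₂ (hr₁.trans hr₂.symm)
    (hw₁.trans hw₂.symm) hsim, hr₁ ▸ hg₁, hr₂ ▸ hg₂, hs₁, hs₂⟩

/-- Key extraction lemma: two distinct witnesses of a reachable signature yield
a reachable signature with two dissimilar witnesses. -/
lemma extract {G : LS2NF T N} {w : Sentence T} :
    ∀ (t₁ t₂ : ParseTree T N) (x δ : ℕ), t₁.Valid G → t₂.Valid G →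
      t₁.root = t₂.root → t₁.word = t₂.word → t₁.word = sub w x δ →
      δ = t₁.word.length → x + δ ≤ w.length → t₁ ≠ t₂ →
      (if δ = 0 then PRe G w t₁.root else PR G w t₁.root x δ) →
      ∃ H x' δ' s₁ s₂, x' + δ' ≤ w.length ∧
        (if δ' = 0 then PRe G w H else PR G w H x' δ') ∧
        s₁.Valid G ∧ s₂.Valid G ∧ s₁.root = H ∧ s₂.root = H ∧
        s₁.word = sub w x' δ' ∧ s₂.word = sub w x' δ' ∧
        δ' = s₁.word.length ∧ ¬ ParseSimilar s₁ s₂ := by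
  intro t₁
  induction t₁ with
  | eps A =>
    intro t₂ x δ hv₁ hv₂ hroot hword hsub hδ hb hne hinv
    by_cases hsim : ParseSimilar (.eps A) t₂
    · cases hsim; exact absurd rfl hne
    · exact ⟨_, x, δ, _, t₂, hb, hinv, hv₁, hv₂, rfl, hroot.symm, hsub,
        hword ▸ hsub, hδ, hsim⟩
  | leaf A tok =>
    intro t₂ x δ hv₁ hv₂ hroot hword hsub hδ hb hne hinv
    by_cases hsim : ParseSimilar (.leaf A tok) t₂
    · cases hsim; exact absurd rfl hne
    · exact ⟨_, x, δ, _, t₂, hb, hinv, hv₁, hv₂, rfl, hroot.symm, hsub,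
        hword ▸ hsub, hδ, hsim⟩
  | unary A c ih =>
    intro t₂ x δ hv₁ hv₂ hroot hword hsub hδ hb hne hinv
    by_cases hsim : ParseSimilar (.unary A c) t₂
    · cases hsim with
      | @unary _ c₂ _ hcr hcw =>
        have hnec : c ≠ c₂ := fun h => hne (by rw [h])
        obtain ⟨φ, hrule, hφ, hvc⟩ :
            ∃ φ, (A, Clause.unary c.root φ) ∈ G.P ∧ φ c.word ∧ c.Valid G := by
          cases hv₁ with
          | unary hr hp hv => exact ⟨_, hr, hp, hv⟩
        have hvc₂ : c₂.Valid G := by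
          cases hv₂ with
          | unary hr hp hv => exact hv
        have hinv' : if δ = 0 then PRe G w c.root else PR G w c.root x δ := by
          split
          · next h0 =>
            rw [if_pos h0] at hinv
            exact PRe.unary hrule hinv
          · next h0 =>
            rw [if_neg h0] at hinv
            exact PR.unary hrule hinv (hsub ▸ hφ)
        exact ih c₂ x δ hvc hvc₂ hcr hcw hsub hδ hb hnec hinv'
    · exact ⟨_, x, δ, _, t₂, hb, hinv, hv₁, hv₂, rfl, hroot.symm, hsub,
        hword ▸ hsub, hδ, hsim⟩
  | binary A a₁ a₂ ih₁ ih₂ =>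
    intro t₂ x δ hv₁ hv₂ hroot hword hsub hδ hb hne hinv
    by_cases hsim : ParseSimilar (.binary A a₁ a₂) t₂
    · cases hsim with
      | @binary _ _ b₁ b₂ _ hr1 hw1 hr2 hw2 =>
        obtain ⟨φ, hrule, hφ, hva₁, hva₂⟩ :
            ∃ φ, (A, Clause.binary a₁.root a₂.root φ) ∈ G.P ∧
              φ a₁.word a₂.word ∧ a₁.Valid G ∧ a₂.Valid G := by
          cases hv₁ with
          | binary hr hp h1 h2 => exact ⟨_, hr, hp, h1, h2⟩
        obtain ⟨hvb₁, hvb₂⟩ : b₁.Valid G ∧ b₂.Valid G := by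
          cases hv₂ with
          | binary hr hp h1 h2 => exact ⟨h1, h2⟩
        have hwa : a₁.word ++ a₂.word = sub w x δ := hsub
        have hδa : δ = a₁.word.length + a₂.word.length := by
          rw [hδ]; exact List.length_append
        obtain ⟨h1, h2⟩ := sub_split hwa (by omega)
        set δ₁ := a₁.word.length with hδ₁
        set δ₂ := a₂.word.length with hδ₂
        have hbase : if δ = 0 then PRe G w A else PR G w A x δ := hinv
        by_cases hab : a₁ = b₁
        · have hab₂ : a₂ ≠ b₂ := fun h => hne (by rw [hab, h])
          have hinv' : if δ₂ = 0 then PRe G w a₂.root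
              else PR G w a₂.root (x + δ₁) δ₂ := by
            split
            · next h0 =>
              by_cases hδ0 : δ = 0
              · rw [if_pos hδ0] at hbase
                exact PRe.binR hrule hbase (nullable_of_tree hva₁
                  (List.length_eq_zero_iff.mp (by omega)))
              · rw [if_neg hδ0] at hbase
                have hwa₁ : a₁.word = sub w x δ := by
                  have : a₂.word = [] := List.length_eq_zero_iff.mp h0
                  rw [this] at hwa; simpa using hwa
                refine PRe.binDR hrule (by omega) hb hbase ?_
                have hlen : a₁.word.length = δ := by omega
                have hpd := pd_complete (w := w) hva₁ x
                  (by rw [hlen]; exact hwa₁)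
                  (by intro hnil; rw [hnil] at hlen; simp at hlen; omega)
                rwa [hlen] at hpd
            · next h0 =>
              refine PR.right (δ' := δ₁) hrule (by omega) ?_ ?_ ?_
              · have hx : x + δ₁ - δ₁ = x := by omega
                rw [hx]
                rw [if_neg (by omega : ¬ δ = 0)] at hbase
                rwa [show δ₁ + δ₂ = δ by omega]
              · have hx : x + δ₁ - δ₁ = x := by omega
                rw [hx]
                split
                · next hz =>
                  exact nullable_of_tree hva₁ (List.length_eq_zero_iff.mp (by omega))
                · next hz =>
                  exact pd_complete hva₁ x h1 (fun hnil => hz (by rw [hδ₁, hnil]; rfl))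
              · have hx : x + δ₁ - δ₁ = x := by omega
                rw [hx, ← h1, ← h2]
                exact hφ
          exact ih₂ b₂ (x + δ₁) δ₂ hva₂ hvb₂ hr2 hw2 h2 rfl (by omega) hab₂ hinv'
        · have hinv' : if δ₁ = 0 then PRe G w a₁.root
              else PR G w a₁.root x δ₁ := by
            split
            · next h0 =>
              by_cases hδ0 : δ = 0
              · rw [if_pos hδ0] at hbase
                exact PRe.binL hrule hbase (nullable_of_tree hva₂
                  (List.length_eq_zero_iff.mp (by omega)))
              · rw [if_neg hδ0] at hbase
                have hwa₂ : a₂.word = sub w x δ := by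
                  have : a₁.word = [] := List.length_eq_zero_iff.mp h0
                  rw [this] at hwa; simpa using hwa
                refine PRe.binDL hrule (by omega) hb hbase ?_
                have hlen : a₂.word.length = δ := by omega
                have hpd := pd_complete (w := w) hva₂ x
                  (by rw [hlen]; exact hwa₂)
                  (by intro hnil; rw [hnil] at hlen; simp at hlen; omega)
                rwa [hlen] at hpd
            · next h0 =>
              refine PR.left (δ' := δ₂) hrule (by omega) ?_ ?_ ?_
              · rw [if_neg (by omega : ¬ δ = 0)] at hbase
                rwa [show δ₁ + δ₂ = δ by omega]
              · split
                · next hz =>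
                  exact nullable_of_tree hva₂ (List.length_eq_zero_iff.mp (by omega))
                · next hz =>
                  exact pd_complete hva₂ (x + δ₁) h2
                    (fun hnil => hz (by rw [hδ₂, hnil]; rfl))
              · rw [← h1, ← h2]
                exact hφ
          exact ih₁ b₁ x δ₁ hva₁ hvb₁ hr1 hw1 h1 rfl (by omega) hab hinv'
    · exact ⟨_, x, δ, _, t₂, hb, hinv, hv₁, hv₂, rfl, hroot.symm, hsub,
        hword ▸ hsub, hδ, hsim⟩

end Stmt12Aux

/-- Completeness: if some sentence `w` with `|w| = k` makes
`S ⇒ w` ambiguous, then some model satisfies `Φ_amb^k`. -/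
theorem stmt12 {T N : Type} [Finite T] [Finite N] [Nonempty N]
    (G : LS2NF T N) (hacyc : Acyclic G) (k : ℕ)
    (h : ∃ w : Sentence T, w.length = k ∧ Ambiguous G G.S w) :
    ∃ m : Model T N k, SatPhiAmb G m := by
  open Stmt12Aux in
  obtain ⟨w, hw, t₁, t₂, hne, ⟨hv₁, hr₁, hw₁⟩, ⟨hv₂, hr₂, hw₂⟩⟩ := h
  subst hw
  refine ⟨mk G w, satD G w, satRe G w, satR G w, ?_⟩
  have hsubw : t₁.word = sub w 0 w.length := by
    rw [hw₁]; simp [sub]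
  have hinv : if w.length = 0 then PRe G w t₁.root
      else PR G w t₁.root 0 w.length := by
    split
    · next h0 => exact PRe.start hr₁ h0
    · exact PR.start hr₁ rfl rfl
  obtain ⟨H, x', δ', s₁, s₂, hb, hinv', hsv₁, hsv₂, hsr₁, hsr₂, hsw₁, hsw₂,
      hδ', hsim⟩ :=
    extract t₁ t₂ 0 w.length hv₁ hv₂ (hr₁.trans hr₂.symm)
      (hw₁.trans hw₂.symm) hsubw (by rw [hw₁]) (by omega) hne hinv
  refine ⟨H, ?_⟩
  by_cases h0 : δ' = 0
  · subst h0
    rw [if_pos rfl] at hinv'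
    left
    refine ⟨mk_Re.mpr hinv', ?_⟩
    have hz₁ : s₁.word = sub w 0 0 := by rw [hsw₁]; rfl
    have hz₂ : s₂.word = sub w 0 0 := by rw [hsw₂]; rfl
    exact multi_of_dissimilar hsv₁ hsv₂ hsr₁ hsr₂ hz₁ hz₂ hδ' (by omega) hsim
  · rw [if_neg h0] at hinv'
    right
    exact ⟨x', δ', by omega, hb, mk_R.mpr hinv',
      multi_of_dissimilar hsv₁ hsv₂ hsr₁ hsr₂ hsw₁ hsw₂ hδ' hb hsim⟩
end

section
/- Let G = (N, Σ, P, S) and G' = (N, Σ, P', S) be LS2NFs such that G' is a refinement of G, and let w be a sentence. If w is unambiguous under G, then w is unambiguous under G'. -/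
variable {T N : Type}

lemma valid_of_refinement {T N : Type} {G G' : LS2NF T N} (href : Refinement G G')
    {t : ParseTree T N} (h : t.Valid G') : t.Valid G := by
  induction h with
  | eps hP =>
    rcases href.2 _ hP with h | ⟨A, B, φ, he, _⟩ | ⟨A, B, C, φ, he, _⟩
    · exact .eps h
    · cases he
    · cases he
  | leaf hP =>
    rcases href.2 _ hP with h | ⟨A, B, φ, he, _⟩ | ⟨A, B, C, φ, he, _⟩
    · exact .leaf h
    · cases he
    · cases he
  | unary hP hφ _ ih =>
    rcases href.2 _ hP with h | ⟨A, B, φ, he, hT⟩ | ⟨A, B, C, φ, he, _⟩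
    · exact .unary h hφ ih
    · cases he; exact .unary hT trivial ih
    · cases he
  | binary hP hφ _ _ ih₁ ih₂ =>
    rcases href.2 _ hP with h | ⟨A, B, φ, he, _⟩ | ⟨A, B, C, φ, he, hT⟩
    · exact .binary h hφ ih₁ ih₂
    · cases he
    · cases he; exact .binary hT trivial ih₁ ih₂

/-- refinement preserves unambiguity of a sentence. -/
theorem stmt13 {T N : Type} [Finite T] [Finite N] [Nonempty N]
    (G G' : LS2NF T N) (href : Refinement G G') (w : Sentence T)
    (hunamb : ∀ t₁ t₂ : ParseTree T N,
      Witness G t₁ G.S w → Witness G t₂ G.S w → t₁ = t₂) :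
    ∀ t₁ t₂ : ParseTree T N,
      Witness G' t₁ G'.S w → Witness G' t₂ G'.S w → t₁ = t₂ := by
  intro t₁ t₂ h₁ h₂
  exact hunamb t₁ t₂
    ⟨valid_of_refinement href h₁.1, href.1 ▸ h₁.2.1, h₁.2.2⟩
    ⟨valid_of_refinement href h₂.1, href.1 ▸ h₂.2.1, h₂.2.2⟩
end
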